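/- Suppose all dual thresholds equal d, i.e., thr(v) = deg(v) − d for every vertex v (with deg(v) ≥ d). Then X ⊆ V(G) is a perfect target set of (G, thr) if and only if the induced subgraph G[V(G) \ X] is d-degenerate. -/
import Mathlib


open scoped Classical

noncomputable def actSeq {V : Type*} [Fintype V] (G : SimpleGraph V) (thr : V → ℕ)
    (X : Finset V) : ℕ → Finset V
  | 0 => X
  | i + 1 => actSeq G thr X i ∪
      Finset.univ.filter (fun v => thr v ≤ (G.neighborFinset v ∩ actSeq G thr X i).card)

noncomputable def actFinal {V : Type*} [Fintype V] (G : SimpleGraph V) (thr : V → ℕ)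
    (X : Finset V) : Finset V :=
  actSeq G thr X (Fintype.card V)

def IsPerfectTargetSet {V : Type*} [Fintype V] (G : SimpleGraph V) (thr : V → ℕ)
    (X : Finset V) : Prop :=
  actFinal G thr X = Finset.univ

lemma actSeq_mem_succ {V : Type*} [Fintype V] (G : SimpleGraph V) (thr : V → ℕ)
    (X : Finset V) (i : ℕ) (v : V) :
    v ∈ actSeq G thr X (i + 1) ↔
      v ∈ actSeq G thr X i ∨ thr v ≤ (G.neighborFinset v ∩ actSeq G thr X i).card := by
  simp [actSeq]

lemma actSeq_mono {V : Type*} [Fintype V] (G : SimpleGraph V) (thr : V → ℕ)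
    (X : Finset V) : Monotone (actSeq G thr X) := by
  apply monotone_nat_of_le_succ
  intro i
  exact Finset.subset_union_left

theorem dual_threshold_degeneracy {V : Type*} [Fintype V]
    (G : SimpleGraph V) (d : ℕ) (hd : ∀ v : V, d ≤ G.degree v) (X : Finset V) :
    IsPerfectTargetSet G (fun v => G.degree v - d) X ↔
      ∀ W : Finset V, W ⊆ Finset.univ \ X → W.Nonempty →
        ∃ v ∈ W, (G.neighborFinset v ∩ W).card ≤ d := by
  set thr : V → ℕ := fun v => G.degree v - d with hthr
  set A : ℕ → Finset V := actSeq G thr X with hA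
  constructor
  · intro hperf W hW hne
    -- every vertex eventually active
    have hall : ∀ w : V, ∃ t, w ∈ A t := by
      intro w
      refine ⟨Fintype.card V, ?_⟩
      have h := hperf
      unfold IsPerfectTargetSet actFinal at h
      rw [hA, h]
      exact Finset.mem_univ w
    have hex : ∃ t, ∃ w ∈ W, w ∈ A t := by
      obtain ⟨w, hw⟩ := hne
      obtain ⟨t, ht⟩ := hall w
      exact ⟨t, w, hw, ht⟩
    let t₀ := Nat.find hex
    obtain ⟨v, hvW, hvA⟩ : ∃ w ∈ W, w ∈ A t₀ := Nat.find_spec hex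
    have hmin : ∀ s < t₀, ∀ w ∈ W, w ∉ A s := by
      intro s hs w hw hwA
      exact Nat.find_min hex hs ⟨w, hw, hwA⟩
    -- t₀ ≠ 0 since A 0 = X and W ∩ X = ∅
    have hWX : ∀ w ∈ W, w ∉ X := by
      intro w hw
      have := hW hw
      simp at this
      exact this
    have ht0 : t₀ ≠ 0 := by
      intro h
      have : v ∈ A 0 := h ▸ hvA
      exact hWX v hvW this
    obtain ⟨s, hs⟩ : ∃ s, t₀ = s + 1 := ⟨t₀ - 1, by omega⟩
    have hvAs : v ∉ A s := hmin s (by omega) v hvW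
    have hthr_le : thr v ≤ (G.neighborFinset v ∩ A s).card := by
      have := hvA
      rw [hs] at this
      rcases (actSeq_mem_succ G thr X s v).1 this with h | h
      · exact absurd h hvAs
      · exact h
    -- A s ∩ W = ∅
    have hdisj : ∀ w ∈ W, w ∉ A s := fun w hw => hmin s (by omega) w hw
    have hsub : G.neighborFinset v ∩ A s ⊆ G.neighborFinset v \ W := by
      intro x hx
      simp only [Finset.mem_inter] at hx
      simp only [Finset.mem_sdiff]
      exact ⟨hx.1, fun hxW => hdisj x hxW hx.2⟩
    have h1 : (G.neighborFinset v ∩ A s).card ≤ (G.neighborFinset v \ W).card :=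
      Finset.card_le_card hsub
    have h2 : (G.neighborFinset v ∩ W).card + (G.neighborFinset v \ W).card
        = (G.neighborFinset v).card := Finset.card_inter_add_card_sdiff _ _
    have h3 : (G.neighborFinset v).card = G.degree v := G.card_neighborFinset_eq_degree v
    have h4 : d ≤ G.degree v := hd v
    refine ⟨v, hvW, ?_⟩
    simp only [hthr] at hthr_le
    omega
  · intro hdeg
    -- growth claim
    have key : ∀ i, A i = Finset.univ ∨ i ≤ (A i).card := by
      intro i
      induction i with
      | zero => right; exact Nat.zero_le _
      | succ i ih =>
        rcases ih with h | h
        · left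
          apply Finset.eq_univ_of_forall
          intro v
          have : v ∈ A i := h ▸ Finset.mem_univ v
          exact actSeq_mono G thr X (Nat.le_succ i) this
        · by_cases huniv : A i = Finset.univ
          · left
            apply Finset.eq_univ_of_forall
            intro v
            have : v ∈ A i := huniv ▸ Finset.mem_univ v
            exact actSeq_mono G thr X (Nat.le_succ i) this
          · right
            set W := Finset.univ \ A i with hWdef
            have hne : W.Nonempty := by
              rw [Finset.sdiff_nonempty]
              intro hsub
              exact huniv (Finset.univ_subset_iff.mp hsub)
            have hWsub : W ⊆ Finset.univ \ X := by
              intro w hw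
              simp only [hWdef, Finset.mem_sdiff] at hw ⊢
              refine ⟨Finset.mem_univ w, fun hwX => hw.2 ?_⟩
              exact actSeq_mono G thr X (Nat.zero_le i) hwX
            obtain ⟨v, hvW, hvcard⟩ := hdeg W hWsub hne
            have hvA : v ∉ A i := by
              simp only [hWdef, Finset.mem_sdiff] at hvW
              exact hvW.2
            -- N ∩ W = N \ A i
            have hNW : G.neighborFinset v ∩ W = G.neighborFinset v \ A i := by
              ext x
              simp [hWdef, Finset.mem_sdiff, Finset.mem_inter, and_assoc]
            have h2 : (G.neighborFinset v ∩ A i).card + (G.neighborFinset v \ A i).card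
                = (G.neighborFinset v).card := Finset.card_inter_add_card_sdiff _ _
            have h3 : (G.neighborFinset v).card = G.degree v := G.card_neighborFinset_eq_degree v
            have hthr_le : thr v ≤ (G.neighborFinset v ∩ A i).card := by
              simp only [hthr]
              rw [hNW] at hvcard
              omega
            have hvnext : v ∈ A (i + 1) := by
              rw [hA, actSeq_mem_succ]
              right
              exact hthr_le
            have hss : A i ⊂ A (i + 1) :=
              ⟨actSeq_mono G thr X (Nat.le_succ i), fun hc => hvA (hc hvnext)⟩
            have := Finset.card_lt_card hss
            omega
    rcases key (Fintype.card V) with h | h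
    · exact h
    · unfold IsPerfectTargetSet actFinal
      apply Finset.eq_univ_of_card
      exact le_antisymm (Finset.card_le_univ _) h
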